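/- Let φ̄ ∈ X, δ > 0, τ > 1, and let yᵟ ∈ Y satisfy ‖yᵟ − L φ̄‖ ≤ δ. Suppose φ : [0,∞) → X is differentiable and satisfies the noisy-data flow φ'(t) = −L*(L φ(t) − yᵟ) for all t ≥ 0. Then at every time t ≥ 0 with ‖L φ(t) − yᵟ‖ > τ δ, the squared iteration error satisfies d/dt ‖φ(t) − φ̄‖² ≤ −2 (1 − 1/τ) ‖L φ(t) − yᵟ‖² < 0; in particular the iteration error is strictly monotone decreasing as long as the residual exceeds τ δ. -/

import Mathlib

/-- Noisy-data flow with `‖yᵟ − L φ̄‖ ≤ δ`, `τ > 1`: at every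
time `t ≥ 0` where the residual exceeds `τ δ`, the squared error satisfies
`d/dt ‖φ(t) − φ̄‖² ≤ −2(1 − 1/τ)‖L φ(t) − yᵟ‖² < 0`. -/
theorem noisy_flow_strict_monotonicity
    {X Y : Type*}
    [NormedAddCommGroup X] [InnerProductSpace ℝ X] [CompleteSpace X]
    [NormedAddCommGroup Y] [InnerProductSpace ℝ Y] [CompleteSpace Y]
    (L : X →L[ℝ] Y) (φbar : X) (δ τ : ℝ) (hδ : 0 < δ) (hτ : 1 < τ)
    (yδ : Y) (hnoise : ‖yδ - L φbar‖ ≤ δ) (φ : ℝ → X)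
    (hflow : ∀ t : ℝ, 0 ≤ t →
      HasDerivAt φ (-(L.adjoint (L (φ t) - yδ))) t) :
    ∀ t : ℝ, 0 ≤ t → τ * δ < ‖L (φ t) - yδ‖ →
      ∃ D : ℝ, HasDerivAt (fun s => ‖φ s - φbar‖ ^ 2) D t ∧
        D ≤ -2 * (1 - 1/τ) * ‖L (φ t) - yδ‖ ^ 2 ∧ D < 0 := by
  intro t ht hres
  set r : Y := L (φ t) - yδ with hr
  have hτ0 : (0:ℝ) < τ := lt_trans one_pos hτ
  have hrpos : 0 < ‖r‖ := lt_of_le_of_lt (by positivity) hres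
  have hf : HasDerivAt (fun s => φ s - φbar) (-(L.adjoint r)) t :=
    (hflow t ht).sub_const φbar
  have hinner := hf.inner ℝ hf
  set D : ℝ := inner ℝ (φ t - φbar) (-(L.adjoint r)) +
      inner ℝ (-(L.adjoint r)) (φ t - φbar) with hDdef
  have hD : HasDerivAt (fun s => ‖φ s - φbar‖ ^ 2) D t := by
    simpa only [real_inner_self_eq_norm_sq] using hinner
  have hDeq : D = -2 * inner ℝ r (L (φ t) - L φbar) := by
    simp only [hDdef, inner_neg_left, inner_neg_right,
      ContinuousLinearMap.adjoint_inner_left, ContinuousLinearMap.adjoint_inner_right, map_sub]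
    rw [real_inner_comm (L (φ t) - L φbar) r]
    ring
  have hsplit : (inner ℝ r (L (φ t) - L φbar) : ℝ) = ‖r‖^2 + inner ℝ r (yδ - L φbar) := by
    have h2 : L (φ t) - L φbar = r + (yδ - L φbar) := by rw [hr]; abel
    rw [h2, inner_add_right, real_inner_self_eq_norm_sq]
  have hbound : |(inner ℝ r (yδ - L φbar) : ℝ)| ≤ ‖r‖ * δ :=
    le_trans (abs_real_inner_le_norm _ _)
      (mul_le_mul_of_nonneg_left hnoise (norm_nonneg _))
  have hδr : ‖r‖ * δ ≤ ‖r‖ ^ 2 / τ := by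
    have : δ ≤ ‖r‖ / τ := by
      rw [le_div_iff₀ hτ0]; nlinarith [hres]
    calc ‖r‖ * δ ≤ ‖r‖ * (‖r‖ / τ) := mul_le_mul_of_nonneg_left this (norm_nonneg _)
      _ = ‖r‖ ^ 2 / τ := by ring
  have h1 : (inner ℝ r (yδ - L φbar) : ℝ) ≥ -(‖r‖^2 / τ) := by
    have := neg_abs_le (inner ℝ r (yδ - L φbar) : ℝ)
    linarith
  have hexp : -2 * (1 - 1/τ) * ‖r‖ ^ 2 = -2 * ‖r‖ ^ 2 + 2 * (‖r‖ ^ 2 / τ) := by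
    field_simp; ring
  refine ⟨D, hD, ?_, ?_⟩
  · rw [hDeq, hsplit, hexp]; linarith
  · rw [hDeq, hsplit]
    have hτr : ‖r‖ ^ 2 / τ < ‖r‖ ^ 2 := by
      rw [div_lt_iff₀ hτ0]; nlinarith [pow_pos hrpos 2]
    linarith
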